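/- The orbit S_{(δ₁,...,δ_{p−1})} of points P = (x₁,...,x_p) in the grid ∏{0,...,mᵢ} with index I(P) = (δ₁,...,δ_{p−1}) has cardinality ∏_{i=1}^p ((mᵢ+1) + (−1)^{[δ_{i−1}]₂}·[mᵢ+1]₂)/2 + ∏_{i=1}^p ((mᵢ+1) + (−1)^{[δ_{i−1}+1]₂}·[mᵢ+1]₂)/2, where δ₀ = 0 and [a]₂ = a mod 2. -/
import Mathlib

lemma count_parity (n e : ℕ) (he : e ≤ 1) :
    ((Finset.range n).filter (fun k => k % 2 = e)).card = (n + 1 - e) / 2 := by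
  induction n with
  | zero => simp; omega
  | succ n ih =>
    rw [Finset.range_add_one, Finset.filter_insert]
    by_cases h : n % 2 = e
    · rw [if_pos h, Finset.card_insert_of_notMem (by simp)]
      omega
    · rw [if_neg h]
      omega

theorem orbit_cardinality (p : ℕ) (hp : 2 ≤ p) (m : Fin p → ℕ) (hm : ∀ i, 0 < m i)
    (δ : Fin p → ℕ) (hδ0 : δ ⟨0, by omega⟩ = 0) (hδ : ∀ i, δ i ≤ 1) :
    (((Fintype.piFinset (fun i => Finset.range (m i + 1))).filter
        (fun x : Fin p → ℕ => ∀ j, (x ⟨0, by omega⟩ + x j) % 2 = δ j)).card : ℤ) =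
      (∏ i, (((m i : ℤ) + 1) + (-1) ^ (δ i) * ((m i + 1) % 2)) / 2) +
      (∏ i, (((m i : ℤ) + 1) + (-1) ^ (δ i + 1) * ((m i + 1) % 2)) / 2) := by
  have hp0 : 0 < p := by omega
  set i0 : Fin p := ⟨0, hp0⟩ with hi0
  have hδ0' : δ i0 = 0 := hδ0
  set A : Fin p → Finset ℕ :=
    fun i => (Finset.range (m i + 1)).filter (fun k => k % 2 = δ i) with hA
  set B : Fin p → Finset ℕ :=
    fun i => (Finset.range (m i + 1)).filter (fun k => k % 2 = (δ i + 1) % 2) with hB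
  have key : (Fintype.piFinset (fun i => Finset.range (m i + 1))).filter
        (fun x : Fin p → ℕ => ∀ j, (x i0 + x j) % 2 = δ j)
      = Fintype.piFinset A ∪ Fintype.piFinset B := by
    ext x
    simp only [Finset.mem_filter, Fintype.mem_piFinset, Finset.mem_union, hA, hB,
      Finset.mem_range]
    constructor
    · rintro ⟨h1, h2⟩
      have hx0 : x i0 % 2 = 0 ∨ x i0 % 2 = 1 := Nat.mod_two_eq_zero_or_one _
      rcases hx0 with h0 | h0
      · left
        intro i
        have h2i := h2 i
        have := hδ i
        exact ⟨h1 i, by omega⟩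
      · right
        intro i
        have h2i := h2 i
        have := hδ i
        exact ⟨h1 i, by omega⟩
    · rintro (h | h)
      · refine ⟨fun i => (h i).1, fun j => ?_⟩
        have h0 := (h i0).2
        rw [hδ0'] at h0
        have hj := (h j).2
        have := hδ j
        omega
      · refine ⟨fun i => (h i).1, fun j => ?_⟩
        have h0 := (h i0).2
        rw [hδ0'] at h0
        have hj := (h j).2
        have := hδ j
        omega
  have hdisj : Disjoint (Fintype.piFinset A) (Fintype.piFinset B) := by
    rw [Finset.disjoint_left]
    intro x hxA hxB
    have h1 := (Fintype.mem_piFinset.mp hxA) i0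
    have h2 := (Fintype.mem_piFinset.mp hxB) i0
    simp only [hA, hB, Finset.mem_filter, hδ0'] at h1 h2
    omega
  rw [key, Finset.card_union_of_disjoint hdisj, Fintype.card_piFinset,
    Fintype.card_piFinset]
  push_cast
  have hAcard : ∀ i, ((A i).card : ℤ)
      = (((m i : ℤ) + 1) + (-1) ^ (δ i) * ((m i + 1) % 2)) / 2 := by
    intro i
    rw [hA]
    simp only
    rw [count_parity _ _ (hδ i)]
    rcases Nat.le_one_iff_eq_zero_or_eq_one.mp (hδ i) with h | h <;> simp [h] <;> omega
  have hBcard : ∀ i, ((B i).card : ℤ)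
      = (((m i : ℤ) + 1) + (-1) ^ (δ i + 1) * ((m i + 1) % 2)) / 2 := by
    intro i
    rw [hB]
    simp only
    rw [count_parity _ _ (by omega)]
    rcases Nat.le_one_iff_eq_zero_or_eq_one.mp (hδ i) with h | h <;> simp [h] <;> omega
  rw [Finset.prod_congr rfl (fun i _ => hAcard i), Finset.prod_congr rfl (fun i _ => hBcard i)]
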